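/- All solutions of the chemostat system with non-negative initial conditions are bounded and defined for all t ≥ 0. -/

import Mathlib

open Set Filter Topology NNReal



/-- A locally Lipschitz function is Lipschitz on every compact set. -/
lemma locallyLipschitz_lipschitzOn_compact
    {X Y : Type*} [MetricSpace X] [MetricSpace Y] {f : X → Y}
    (hf : LocallyLipschitz f) {s : Set X} (hs : IsCompact s) :
    ∃ K : ℝ, 0 ≤ K ∧ ∀ x ∈ s, ∀ y ∈ s, dist (f x) (f y) ≤ K * dist x y := by
  rcases s.eq_empty_or_nonempty with rfl | ⟨z, hz⟩
  · exact ⟨0, le_refl 0, by simp⟩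
  have hcont : Continuous f := hf.continuous
  choose K t ht hlip using hf
  obtain ⟨F, hFs, hFcov⟩ := hs.elim_nhds_subcover (fun x => interior (t x))
    (fun x _ => interior_mem_nhds.mpr (ht x))
  obtain ⟨δ, hδ, hball⟩ := lebesgue_number_lemma_of_metric (ι := ↥F)
    (c := fun i => interior (t i.1)) hs (fun i => isOpen_interior) (by
      intro y hy
      rcases mem_iUnion₂.1 (hFcov hy) with ⟨x, hxF, hx⟩
      exact mem_iUnion.2 ⟨⟨x, hxF⟩, hx⟩)
  have himg : IsCompact (f '' s) := hs.image hcont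
  obtain ⟨C, hC⟩ := himg.isBounded.subset_closedBall (f z)
  set K0 : ℝ≥0 := F.sup K with hK0
  refine ⟨max (K0:ℝ) ((2 * max C 0) / δ), le_max_of_le_left K0.coe_nonneg, fun x hx y hy => ?_⟩
  rcases lt_or_ge (dist x y) δ with hlt | hge
  · obtain ⟨i, hi⟩ := hball x hx
    have hxi : x ∈ t i.1 := interior_subset (hi (Metric.mem_ball_self hδ))
    have hyi : y ∈ t i.1 := interior_subset (hi (by simpa [Metric.mem_ball, dist_comm] using hlt))
    have h1 : dist (f x) (f y) ≤ (K i.1) * dist x y := (hlip i.1).dist_le_mul x hxi y hyi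
    refine h1.trans (mul_le_mul_of_nonneg_right ?_ dist_nonneg)
    have : K i.1 ≤ K0 := Finset.le_sup i.2
    exact le_max_of_le_left (by exact_mod_cast this)
  · have hx' : dist (f x) (f z) ≤ max C 0 :=
      le_max_of_le_left (hC ⟨x, hx, rfl⟩)
    have hy' : dist (f y) (f z) ≤ max C 0 :=
      le_max_of_le_left (hC ⟨y, hy, rfl⟩)
    have h2 : dist (f x) (f y) ≤ 2 * max C 0 := by
      have := dist_triangle (f x) (f z) (f y)
      rw [dist_comm (f z) (f y)] at this
      linarith
    have h3 : 2 * max C 0 ≤ ((2 * max C 0) / δ) * dist x y := by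
      rw [div_mul_eq_mul_div, le_div_iff₀ hδ]
      have h4 : 0 ≤ 2 * max C 0 := by positivity
      nlinarith
    exact h2.trans (h3.trans (mul_le_mul_of_nonneg_right (le_max_right _ _) dist_nonneg))


/-- Barrier lemma: if the derivative is nonpositive above level `c`, the function
stays below `c` on `[0, ∞)`. -/
lemma chemostat_barrier_le {g G : ℝ → ℝ} {c : ℝ}
    (hg : ∀ t ∈ Ici (0:ℝ), HasDerivAt g (G t) t)
    (h0 : g 0 ≤ c)
    (hbar : ∀ t, 0 ≤ t → c < g t → G t ≤ 0) :
    ∀ t, 0 ≤ t → g t ≤ c := by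
  intro t1 ht1
  by_contra hgt
  push_neg at hgt
  have hgc : ContinuousOn g (Icc 0 t1) := fun u hu =>
    ((hg u (mem_Ici.2 hu.1)).continuousAt).continuousWithinAt
  set A := Icc (0:ℝ) t1 ∩ g ⁻¹' (Iic c) with hA
  have hclosed : IsClosed A := hgc.preimage_isClosed_of_isClosed isClosed_Icc isClosed_Iic
  have hne : A.Nonempty := ⟨0, ⟨le_refl 0, ht1⟩, h0⟩
  have hbdd : BddAbove A := ⟨t1, fun u hu => hu.1.2⟩
  obtain ⟨a, ha⟩ : ∃ a : ℝ, a = sSup A := ⟨_, rfl⟩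
  have haA : a ∈ A := by rw [ha]; exact hclosed.csSup_mem hne hbdd
  have ha0 : 0 ≤ a := haA.1.1
  have hat1 : a ≤ t1 := haA.1.2
  have halt : a < t1 := lt_of_le_of_ne hat1 (by
    rintro rfl; exact absurd haA.2 (not_le.2 hgt))
  have hgtc : ∀ u, a < u → u ≤ t1 → c < g u := by
    intro u hau hu
    by_contra h
    push_neg at h
    have hle : u ≤ a := by rw [ha]; exact le_csSup hbdd ⟨⟨le_trans ha0 hau.le, hu⟩, h⟩
    exact absurd hle (not_le.2 hau)
  have hmono : AntitoneOn g (Icc a t1) := by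
    apply antitoneOn_of_deriv_nonpos (convex_Icc a t1)
      (hgc.mono (Icc_subset_Icc_left ha0))
    · intro u hu
      rw [interior_Icc] at hu
      exact ((hg u (mem_Ici.2 (le_trans ha0 hu.1.le))).differentiableAt).differentiableWithinAt
    · intro u hu
      rw [interior_Icc] at hu
      rw [(hg u (mem_Ici.2 (le_trans ha0 hu.1.le))).deriv]
      exact hbar u (le_trans ha0 hu.1.le) (hgtc u hu.1 hu.2.le)
  have h1 : g t1 ≤ g a := hmono (left_mem_Icc.2 halt.le) (right_mem_Icc.2 halt.le) halt.le
  exact absurd (h1.trans haA.2) (not_le.2 hgt)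

/-- Strict barrier lemma: if the derivative is strictly positive at level `0` and the
derivative is continuous, the function stays nonnegative on `[0, ∞)`. -/
lemma chemostat_barrier_pos {g G : ℝ → ℝ}
    (hg : ∀ t ∈ Ici (0:ℝ), HasDerivAt g (G t) t)
    (hGc : ContinuousOn G (Ici 0))
    (h0 : 0 ≤ g 0)
    (hbar : ∀ t, 0 ≤ t → g t = 0 → 0 < G t) :
    ∀ t, 0 ≤ t → 0 ≤ g t := by
  intro t1 ht1
  by_contra hneg
  push_neg at hneg
  have hgc : ContinuousOn g (Icc 0 t1) := fun u hu =>
    ((hg u (mem_Ici.2 hu.1)).continuousAt).continuousWithinAt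
  set A := Icc (0:ℝ) t1 ∩ g ⁻¹' (Ici 0) with hA
  have hclosed : IsClosed A := hgc.preimage_isClosed_of_isClosed isClosed_Icc isClosed_Ici
  have hne : A.Nonempty := ⟨0, ⟨le_refl 0, ht1⟩, h0⟩
  have hbdd : BddAbove A := ⟨t1, fun u hu => hu.1.2⟩
  obtain ⟨a, ha⟩ : ∃ a : ℝ, a = sSup A := ⟨_, rfl⟩
  have haA : a ∈ A := by rw [ha]; exact hclosed.csSup_mem hne hbdd
  have ha0 : 0 ≤ a := haA.1.1
  have hat1 : a ≤ t1 := haA.1.2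
  have halt : a < t1 := lt_of_le_of_ne hat1 (by
    rintro rfl; exact absurd haA.2 (not_le.2 hneg))
  have hlt : ∀ u, a < u → u ≤ t1 → g u < 0 := by
    intro u hau hu
    by_contra h
    push_neg at h
    have hle : u ≤ a := by rw [ha]; exact le_csSup hbdd ⟨⟨le_trans ha0 hau.le, hu⟩, h⟩
    exact absurd hle (not_le.2 hau)
  have hga : g a = 0 := by
    refine le_antisymm ?_ haA.2
    have hnb : (𝓝[Ioc a t1] a).NeBot := by
      rw [← mem_closure_iff_nhdsWithin_neBot, closure_Ioc (ne_of_lt halt)]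
      exact ⟨le_refl a, halt.le⟩
    have htd : Tendsto g (𝓝[Ioc a t1] a) (𝓝 (g a)) :=
      ((hg a (mem_Ici.2 ha0)).continuousAt).tendsto.mono_left nhdsWithin_le_nhds
    exact le_of_tendsto htd (eventually_of_mem self_mem_nhdsWithin
      (fun u hu => (hlt u hu.1 hu.2).le))
  have hGa : 0 < G a := hbar a ha0 hga
  have hev : ∀ᶠ u in 𝓝[Ici 0] a, 0 < G u :=
    (hGc a (mem_Ici.2 ha0)).eventually (eventually_gt_nhds hGa)
  obtain ⟨ε, hε, hball⟩ := Metric.mem_nhdsWithin_iff.1 hev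
  set u := min t1 (a + ε / 2) with hu
  have hau : a < u := lt_min halt (by linarith)
  have hut1 : u ≤ t1 := min_le_left _ _
  have hGpos : ∀ w ∈ Ioo a u, 0 < G w := by
    intro w hw
    apply hball
    constructor
    · rw [Metric.mem_ball, Real.dist_eq, abs_of_pos (by linarith [hw.1] : (0:ℝ) < w - a)]
      have : w < a + ε / 2 := lt_of_lt_of_le hw.2 (min_le_right _ _)
      linarith
    · exact mem_Ici.2 (le_trans ha0 hw.1.le)
  have hmono : StrictMonoOn g (Icc a u) := by
    apply strictMonoOn_of_deriv_pos (convex_Icc a u)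
      (hgc.mono (Icc_subset_Icc (le_refl _) hut1 |>.trans (Icc_subset_Icc_left ha0)))
    · intro w hw
      rw [interior_Icc] at hw
      rw [(hg w (mem_Ici.2 (le_trans ha0 hw.1.le))).deriv]
      exact hGpos w hw
  have h1 : g a < g u := hmono (left_mem_Icc.2 hau.le) (right_mem_Icc.2 hau.le) hau
  have h2 : g u < 0 := hlt u hau hut1
  rw [hga] at h1
  linarith

/-- Gronwall-type comparison: `V' ≤ K - m V` implies `V b ≤ max (V 0) (K/m)`. -/
lemma chemostat_gronwall {V W : ℝ → ℝ} {m K b : ℝ} (hm : 0 < m) (hb : 0 ≤ b)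
    (hV : ∀ t ∈ Icc (0:ℝ) b, HasDerivAt V (W t) t)
    (hW : ∀ t ∈ Icc (0:ℝ) b, W t ≤ K - m * V t) :
    V b ≤ max (V 0) (K / m) := by
  set h : ℝ → ℝ := fun t => (V t - K / m) * Real.exp (m * t) with hh
  have hd : ∀ t ∈ Icc (0:ℝ) b, HasDerivAt h ((W t + m * V t - K) * Real.exp (m * t)) t := by
    intro t ht
    have he : HasDerivAt (fun s : ℝ => Real.exp (m * s)) (Real.exp (m * t) * m) t := by
      have := ((hasDerivAt_id t).const_mul m).exp
      simpa using this
    have h1 := ((hV t ht).sub_const (K / m)).mul he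
    refine h1.congr_deriv ?_
    have e : K / m * m = K := div_mul_cancel₀ K hm.ne'
    linear_combination (-Real.exp (m * t)) * e
  have hmono : AntitoneOn h (Icc 0 b) := by
    apply antitoneOn_of_deriv_nonpos (convex_Icc 0 b)
      (fun u hu => (hd u hu).continuousAt.continuousWithinAt)
    · intro u hu
      rw [interior_Icc] at hu
      exact ((hd u (Ioo_subset_Icc_self hu)).differentiableAt).differentiableWithinAt
    · intro u hu
      rw [interior_Icc] at hu
      rw [(hd u (Ioo_subset_Icc_self hu)).deriv]
      apply mul_nonpos_of_nonpos_of_nonneg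
      · have := hW u (Ioo_subset_Icc_self hu)
        linarith
      · positivity
  have hb0 : h b ≤ h 0 := hmono (left_mem_Icc.2 hb) (right_mem_Icc.2 hb) hb
  have hexp1 : (1:ℝ) ≤ Real.exp (m * b) := by
    rw [show (1:ℝ) = Real.exp 0 by simp]
    exact Real.exp_le_exp.2 (by positivity)
  have h0v : h 0 = V 0 - K / m := by simp [hh]
  rw [h0v] at hb0
  have hbb : (V b - K / m) * Real.exp (m * b) ≤ V 0 - K / m := hb0
  rcases le_total (V 0) (K / m) with hc | hc
  · refine le_max_of_le_right ?_
    by_contra hlt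
    push_neg at hlt
    have := mul_pos (by linarith : (0:ℝ) < V b - K / m) (Real.exp_pos (m * b))
    linarith
  · refine le_max_of_le_left ?_
    by_contra hlt
    push_neg at hlt
    have h1 : (0:ℝ) < V b - K / m := by linarith
    have h2 : V b - K / m ≤ (V b - K / m) * Real.exp (m * b) :=
      le_mul_of_one_le_right h1.le hexp1
    linarith


/-- A solution of a scalar linear ODE `x' = a t * x` with continuous coefficient on `[0, ∞)`
and nonnegative initial condition stays nonnegative. -/
lemma chemostat_x_nonneg {x a : ℝ → ℝ}
    (hx : ∀ t ∈ Ici (0:ℝ), HasDerivAt x (a t * x t) t)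
    (hac : ContinuousOn a (Ici 0))
    (h0 : 0 ≤ x 0) : ∀ t, 0 ≤ t → 0 ≤ x t := by
  intro t1 ht1
  by_contra hneg
  push_neg at hneg
  have hxc : ContinuousOn x (Icc 0 t1) := fun u hu =>
    ((hx u (mem_Ici.2 hu.1)).continuousAt).continuousWithinAt
  -- find a zero of x in [0, t1]
  have h0mem : (0:ℝ) ∈ Icc (x t1) (x 0) := ⟨hneg.le, h0⟩
  obtain ⟨t0, ht0, hxt0⟩ := intermediate_value_Icc' ht1 hxc h0mem
  -- clamp the coefficient
  set θ : ℝ → ℝ := fun t => min (max t 0) t1 with hθ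
  have hθcont : Continuous θ := (continuous_id.max continuous_const).min continuous_const
  have hθmem : ∀ t, θ t ∈ Icc 0 t1 := fun t =>
    ⟨le_min (le_max_right t 0) ht1, min_le_right _ _⟩
  set cf : ℝ → ℝ := fun t => a (θ t) with hcf
  have hccont : Continuous cf :=
    hac.comp_continuous hθcont (fun t => (hθmem t).1)
  obtain ⟨C, hC⟩ := (isCompact_Icc (a := (0:ℝ)) (b := t1)).exists_bound_of_continuousOn
    (hac.mono Icc_subset_Ici_self)
  have hCb : ∀ t, |cf t| ≤ C := fun t => hC _ (hθmem t)
  set v : ℝ → ℝ → ℝ := fun t y => cf t * y with hv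
  have hlip : ∀ t, LipschitzWith (Real.toNNReal C) (v t) := by
    intro t
    apply LipschitzWith.of_dist_le_mul
    intro y z
    have : dist (cf t * y) (cf t * z) = |cf t| * dist y z := by
      rw [Real.dist_eq, Real.dist_eq, ← abs_mul]
      ring_nf
    rw [this]
    apply mul_le_mul_of_nonneg_right _ dist_nonneg
    exact (hCb t).trans (by rw [Real.coe_toNNReal']; exact le_max_left _ _)
  have huniq : EqOn x (fun _ => (0:ℝ)) (Icc t0 t1) := by
    apply ODE_solution_unique hlip (hxc.mono (Icc_subset_Icc_left ht0.1)) ?_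
      continuousOn_const ?_ (by simpa using hxt0)
    · intro t ht
      have htt : t ∈ Icc 0 t1 := ⟨le_trans ht0.1 ht.1, ht.2.le⟩
      have hcfid : cf t = a t := by
        simp only [hcf, hθ]
        rw [max_eq_left htt.1, min_eq_left htt.2]
      have := (hx t (mem_Ici.2 htt.1)).hasDerivWithinAt (s := Ici t)
      simpa [hv, hcfid] using this
    · intro t _
      have : v t 0 = 0 := by simp [hv]
      rw [this]
      exact hasDerivWithinAt_const _ _ _
  have := huniq (right_mem_Icc.2 ht0.2)
  simp only at this
  rw [this] at hneg
  exact absurd hneg (lt_irrefl 0)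


set_option maxHeartbeats 4000000 in
/-- All solutions of the chemostat system with non-negative initial
conditions are defined for all `t ≥ 0` and bounded: there exists a global solution
with the given initial data, and every global solution is bounded on `[0, ∞)`. -/
theorem chemostat_solutions_global_and_bounded
    (n : ℕ) (S0 D : ℝ) (Di : Fin n → ℝ)
    (f p : Fin n → ℝ → ℝ)
    (hS0 : 0 < S0) (hD : 0 < D) (hDi : ∀ i, 0 < Di i)
    (hfL : ∀ i, LocallyLipschitz (f i)) (hpL : ∀ i, LocallyLipschitz (p i))
    (hf0 : ∀ i, f i 0 = 0) (hp0 : ∀ i, p i 0 = 0)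
    (hfpos : ∀ i, ∀ s > (0:ℝ), 0 < f i s) (hppos : ∀ i, ∀ s > (0:ℝ), 0 < p i s)
    (Sinit : ℝ) (xinit : Fin n → ℝ)
    (hS_init : 0 ≤ Sinit) (hx_init : ∀ i, 0 ≤ xinit i) :
    -- the solution is defined for all t ≥ 0 ...
    (∃ S : ℝ → ℝ, ∃ x : Fin n → ℝ → ℝ,
      S 0 = Sinit ∧ (∀ i, x i 0 = xinit i) ∧
      (∀ t ∈ Ici (0:ℝ),
        HasDerivAt S (D * (S0 - S t) - ∑ i, f i (S t) * x i t) t) ∧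
      (∀ i, ∀ t ∈ Ici (0:ℝ),
        HasDerivAt (x i) ((p i (S t) - Di i) * x i t) t)) ∧
    -- ... and every such global solution is bounded on [0, ∞)
    (∀ S : ℝ → ℝ, ∀ x : Fin n → ℝ → ℝ,
      S 0 = Sinit → (∀ i, x i 0 = xinit i) →
      (∀ t ∈ Ici (0:ℝ),
        HasDerivAt S (D * (S0 - S t) - ∑ i, f i (S t) * x i t) t) →
      (∀ i, ∀ t ∈ Ici (0:ℝ),
        HasDerivAt (x i) ((p i (S t) - Di i) * x i t) t) →
      ∃ M : ℝ, ∀ t ∈ Ici (0:ℝ), |S t| ≤ M ∧ ∀ i, |x i t| ≤ M) := by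
  have hfc : ∀ i, Continuous (f i) := fun i => (hfL i).continuous
  have hpc : ∀ i, Continuous (p i) := fun i => (hpL i).continuous
  have hfnn : ∀ i s, 0 ≤ s → 0 ≤ f i s := by
    intro i s hs
    rcases eq_or_lt_of_le hs with h | h
    · rw [← h, hf0 i]
    · exact (hfpos i s h).le
  -- a small level σ below which every `p i` is at most `Di i / 2`
  obtain ⟨σ, hσ, hσp⟩ : ∃ σ : ℝ, 0 < σ ∧ ∀ i, ∀ s, 0 ≤ s → s ≤ σ → p i s ≤ Di i / 2 := by
    have h1 : ∀ᶠ s in 𝓝 (0:ℝ), ∀ i, p i s < Di i / 2 := by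
      rw [eventually_all]
      intro i
      have h2 : Filter.Tendsto (p i) (𝓝 0) (𝓝 0) := by
        have := (hpc i).tendsto 0
        rwa [hp0 i] at this
      exact h2.eventually_lt_const (by linarith [hDi i])
    rw [Metric.eventually_nhds_iff] at h1
    obtain ⟨ε, hε, hball⟩ := h1
    refine ⟨ε / 2, by linarith, fun i s hs0 hsε => ?_⟩
    refine (hball (y := s) ?_ i).le
    rw [Real.dist_eq, sub_zero, abs_of_nonneg hs0]
    linarith
  set B : ℝ := max Sinit S0 with hB
  set B' : ℝ := max B σ with hB'
  have hBS0 : S0 ≤ B := le_max_right _ _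
  have hBSinit : Sinit ≤ B := le_max_left _ _
  have hBB' : B ≤ B' := le_max_left _ _
  have hσB' : σ ≤ B' := le_max_right _ _
  have hB'pos : 0 < B' := lt_of_lt_of_le hσ hσB'
  -- weights c i with c i * p i s ≤ f i s on [σ, B']
  obtain ⟨c, hc0, hcle⟩ : ∃ c : Fin n → ℝ, (∀ i, 0 < c i) ∧
      ∀ i, ∀ s, σ ≤ s → s ≤ B' → c i * p i s ≤ f i s := by
    have hcex : ∀ i, ∃ ci : ℝ, 0 < ci ∧ ∀ s, σ ≤ s → s ≤ B' → ci * p i s ≤ f i s := by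
      intro i
      have hne : (Icc σ B').Nonempty := nonempty_Icc.2 hσB'
      have hcont : ContinuousOn (fun s => f i s / p i s) (Icc σ B') :=
        ((hfc i).continuousOn).div ((hpc i).continuousOn)
          (fun s hs => ne_of_gt (hppos i s (lt_of_lt_of_le hσ hs.1)))
      obtain ⟨s₀, hs₀, hmin⟩ := isCompact_Icc.exists_isMinOn hne hcont
      have hp₀ : 0 < p i s₀ := hppos i s₀ (lt_of_lt_of_le hσ hs₀.1)
      have hf₀ : 0 < f i s₀ := hfpos i s₀ (lt_of_lt_of_le hσ hs₀.1)
      refine ⟨f i s₀ / p i s₀, div_pos hf₀ hp₀, fun s h1 h2 => ?_⟩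
      have hps : 0 < p i s := hppos i s (lt_of_lt_of_le hσ h1)
      have hmins := hmin ⟨h1, h2⟩
      simp only [mem_setOf_eq] at hmins
      calc f i s₀ / p i s₀ * p i s ≤ f i s / p i s * p i s := by
            apply mul_le_mul_of_nonneg_right hmins hps.le
        _ = f i s := by field_simp
    choose c hc1 hc2 using hcex
    exact ⟨c, hc1, hc2⟩
  -- the decay rate m
  obtain ⟨m, hm0, hmD, hmDi⟩ : ∃ m : ℝ, 0 < m ∧ m ≤ D ∧ ∀ i, m ≤ Di i / 2 := by
    set g : Fin (n+1) → ℝ := Fin.cases D (fun i => Di i / 2) with hg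
    refine ⟨Finset.univ.inf' Finset.univ_nonempty g, ?_, ?_, ?_⟩
    · rw [Finset.lt_inf'_iff]
      intro j _
      induction j using Fin.cases with
      | zero => simpa [hg] using hD
      | succ i => simpa [hg] using half_pos (hDi i)
    · have := Finset.inf'_le g (Finset.mem_univ (0 : Fin (n+1)))
      exact this.trans (by simp [hg])
    · intro i
      have := Finset.inf'_le g (Finset.mem_univ (i.succ : Fin (n+1)))
      exact this.trans (by simp [hg])
  -- the key differential inequality
  have key : ∀ (s : ℝ) (y : Fin n → ℝ), 0 ≤ s → s ≤ B' → (∀ i, 0 ≤ y i) →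
      (D * (S0 - s) - ∑ i, f i s * y i) + ∑ i, c i * ((p i s - Di i) * y i)
        ≤ D * S0 - m * (s + ∑ i, c i * y i) := by
    intro s y hs0 hsB hy
    have hterm : ∀ i ∈ Finset.univ, c i * ((p i s - Di i) * y i) - f i s * y i
        ≤ -(m * (c i * y i)) := by
      intro i _
      have hcoef : c i * p i s - f i s ≤ c i * (Di i / 2) := by
        rcases le_total s σ with h | h
        · have h1 : p i s ≤ Di i / 2 := hσp i s hs0 h
          have h2 : 0 ≤ f i s := hfnn i s hs0
          nlinarith [hc0 i]
        · have h1 : c i * p i s ≤ f i s := hcle i s h hsB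
          nlinarith [hc0 i, hDi i]
      have h3 : m ≤ Di i / 2 := hmDi i
      nlinarith [hy i, hc0 i, mul_le_mul_of_nonneg_right hcoef (hy i),
        mul_le_mul_of_nonneg_right h3 (mul_nonneg (hc0 i).le (hy i))]
    have hsum := Finset.sum_le_sum hterm
    rw [Finset.sum_sub_distrib] at hsum
    have hD2 : D * (S0 - s) ≤ D * S0 - m * s := by nlinarith
    have e1 : D * S0 - m * (s + ∑ i, c i * y i)
        = (D * S0 - m * s) + ∑ i, -(m * (c i * y i)) := by
      rw [Finset.sum_neg_distrib, ← Finset.mul_sum]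
      ring
    rw [e1]
    have : (D * (S0 - s) - ∑ i, f i s * y i) + ∑ i, c i * ((p i s - Di i) * y i)
        = D * (S0 - s) + (∑ i, c i * ((p i s - Di i) * y i) - ∑ i, f i s * y i) := by ring
    rw [this]
    exact add_le_add hD2 hsum
  -- bound on the Lyapunov function for any partial solution in the region
  have bddV : ∀ (S : ℝ → ℝ) (x : Fin n → ℝ → ℝ) (b : ℝ), 0 ≤ b →
      (∀ t ∈ Icc (0:ℝ) b, 0 ≤ S t) → (∀ t ∈ Icc (0:ℝ) b, S t ≤ B') →
      (∀ i, ∀ t ∈ Icc (0:ℝ) b, 0 ≤ x i t) →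
      (∀ t ∈ Icc (0:ℝ) b, HasDerivAt S (D * (S0 - S t) - ∑ i, f i (S t) * x i t) t) →
      (∀ i, ∀ t ∈ Icc (0:ℝ) b, HasDerivAt (x i) ((p i (S t) - Di i) * x i t) t) →
      S b + ∑ i, c i * x i b ≤ max (S 0 + ∑ i, c i * x i 0) (D * S0 / m) := by
    intro S x b hb hS0' hSB hx0 hS' hx'
    have := chemostat_gronwall (V := fun t => S t + ∑ i, c i * x i t)
      (W := fun t => (D * (S0 - S t) - ∑ i, f i (S t) * x i t)
        + ∑ i, c i * ((p i (S t) - Di i) * x i t)) (K := D * S0) hm0 hb ?_ ?_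
    · exact this
    · intro t ht
      exact (hS' t ht).add (HasDerivAt.fun_sum fun i _ => ((hx' i t ht)).const_mul (c i))
    · intro t ht
      exact key (S t) (fun i => x i t) (hS0' t ht) (hSB t ht) (fun i => hx0 i t ht)
  set MV : ℝ := max (Sinit + ∑ i, c i * xinit i) (D * S0 / m) with hMV
  have hMVpos : 0 < MV := lt_max_of_lt_right (by positivity)
  have hxinitle : ∀ i, xinit i ≤ MV / c i := by
    intro i
    rw [le_div_iff₀ (hc0 i), mul_comm]
    have h1 : c i * xinit i ≤ ∑ j, c j * xinit j := by
      simpa using Finset.single_le_sum (f := fun j => c j * xinit j)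
        (fun j _ => mul_nonneg (hc0 j).le (hx_init j)) (Finset.mem_univ i)
    have h2 : Sinit + ∑ j, c j * xinit j ≤ MV := le_max_left _ _
    linarith
  constructor
  · -- PART 1: existence
    -- truncation bounds
    set BX : Fin n → ℝ := fun i => MV / c i + 1 with hBXdef
    have hBXpos : ∀ i, 0 < BX i := by
      intro i
      have h0 : 0 ≤ MV / c i := div_nonneg hMVpos.le (hc0 i).le
      simp only [hBXdef]; linarith
    have hMVltBX : ∀ i, MV / c i < BX i := fun i => by simp only [hBXdef]; linarith
    set cS : ℝ → ℝ := fun s => max 0 (min s B') with hcS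
    set cX : Fin n → ℝ → ℝ := fun i y => max 0 (min y (BX i)) with hcX
    have clamp_lip : ∀ (hi a b : ℝ), |max 0 (min a hi) - max 0 (min b hi)| ≤ |a - b| := by
      intro hi a b
      have habs : ∀ u v : ℝ, min u hi - min v hi ≤ |u - v| := by
        intro u v
        rcases le_total u hi with h | h <;> rcases le_total v hi with h' | h'
        · rw [min_eq_left h, min_eq_left h']; exact le_abs_self _
        · rw [min_eq_left h, min_eq_right h']
          rcases abs_cases (u - v) with hc | hc <;> linarith
        · rw [min_eq_right h, min_eq_left h']
          rcases abs_cases (u - v) with hc | hc <;> linarith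
        · rw [min_eq_right h, min_eq_right h']; simp [abs_nonneg]
      have h2 : |min a hi - min b hi| ≤ |a - b| := by
        rw [abs_sub_le_iff]
        refine ⟨habs a b, le_of_le_of_eq (habs b a) (abs_sub_comm b a)⟩
      have h1 : |max (min a hi) 0 - max (min b hi) 0| ≤ |min a hi - min b hi| :=
        abs_max_sub_max_le_abs _ _ _
      rw [max_comm 0 (min a hi), max_comm 0 (min b hi)]
      exact h1.trans h2
    have cS_mem : ∀ s, 0 ≤ cS s ∧ cS s ≤ B' := fun s =>
      ⟨le_max_left _ _, max_le hB'pos.le (min_le_right _ _)⟩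
    have cX_mem : ∀ i y, 0 ≤ cX i y ∧ cX i y ≤ BX i := fun i y =>
      ⟨le_max_left _ _, max_le (hBXpos i).le (min_le_right _ _)⟩
    have cS_id : ∀ s, 0 ≤ s → s ≤ B' → cS s = s := by
      intro s h1 h2; simp only [hcS]; rw [min_eq_left h2, max_eq_right h1]
    have cX_id : ∀ i y, 0 ≤ y → y ≤ BX i → cX i y = y := by
      intro i y h1 h2; simp only [hcX]; rw [min_eq_left h2, max_eq_right h1]
    -- Lipschitz constants and bounds on [0, B']
    have hKfex : ∀ i, ∃ K : ℝ, 0 ≤ K ∧ ∀ a ∈ Icc (0:ℝ) B', ∀ b ∈ Icc (0:ℝ) B',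
        |f i a - f i b| ≤ K * |a - b| := by
      intro i
      obtain ⟨K, hK0, hK⟩ := locallyLipschitz_lipschitzOn_compact (hfL i)
        (isCompact_Icc (a := (0:ℝ)) (b := B'))
      exact ⟨K, hK0, fun a ha b hb => by
        simpa [Real.dist_eq] using hK a ha b hb⟩
    choose Kf hKf0 hKfl using hKfex
    have hKpex : ∀ i, ∃ K : ℝ, 0 ≤ K ∧ ∀ a ∈ Icc (0:ℝ) B', ∀ b ∈ Icc (0:ℝ) B',
        |p i a - p i b| ≤ K * |a - b| := by
      intro i
      obtain ⟨K, hK0, hK⟩ := locallyLipschitz_lipschitzOn_compact (hpL i)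
        (isCompact_Icc (a := (0:ℝ)) (b := B'))
      exact ⟨K, hK0, fun a ha b hb => by
        simpa [Real.dist_eq] using hK a ha b hb⟩
    choose Kp hKp0 hKpl using hKpex
    have hCfex : ∀ i, ∃ C : ℝ, 0 ≤ C ∧ ∀ s ∈ Icc (0:ℝ) B', |f i s| ≤ C := by
      intro i
      obtain ⟨C, hC⟩ := isCompact_Icc.exists_bound_of_continuousOn
        ((hfc i).continuousOn (s := Icc (0:ℝ) B'))
      exact ⟨C, le_trans (abs_nonneg _) (hC 0 ⟨le_refl _, hB'pos.le⟩), fun s hs => hC s hs⟩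
    choose Cf hCf0 hCfb using hCfex
    have hCpex : ∀ i, ∃ C : ℝ, 0 ≤ C ∧ ∀ s ∈ Icc (0:ℝ) B', |p i s| ≤ C := by
      intro i
      obtain ⟨C, hC⟩ := isCompact_Icc.exists_bound_of_continuousOn
        ((hpc i).continuousOn (s := Icc (0:ℝ) B'))
      exact ⟨C, le_trans (abs_nonneg _) (hC 0 ⟨le_refl _, hB'pos.le⟩), fun s hs => hC s hs⟩
    choose Cp hCp0 hCpb using hCpex
    -- the truncated vector field
    set vf : ℝ × (Fin n → ℝ) → ℝ × (Fin n → ℝ) := fun z =>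
      (D * (S0 - cS z.1) - ∑ i, f i (cS z.1) * cX i (z.2 i),
       fun i => (p i (cS z.1) - Di i) * cX i (z.2 i)) with hvf
    have hprod : ∀ (fa fb u v M C : ℝ), |fa| ≤ C → |fb| ≤ C → |u| ≤ M → |v| ≤ M →
        |fa * u - fb * v| ≤ M * |fa - fb| + C * |u - v| := by
      intro fa fb u v M C h1 h2 h3 h4
      have e : fa * u - fb * v = (fa - fb) * u + fb * (u - v) := by ring
      rw [e]
      calc |(fa - fb) * u + fb * (u - v)| ≤ |(fa - fb) * u| + |fb * (u - v)| := abs_add_le _ _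
        _ = |fa - fb| * |u| + |fb| * |u - v| := by rw [abs_mul, abs_mul]
        _ ≤ |fa - fb| * M + C * |u - v| :=
            add_le_add (mul_le_mul_of_nonneg_left h3 (abs_nonneg _))
              (mul_le_mul_of_nonneg_right h2 (abs_nonneg _))
        _ = M * |fa - fb| + C * |u - v| := by ring
    set KL : ℝ := (D + ∑ i, (BX i * Kf i + Cf i)) + ∑ i, (BX i * Kp i + (Cp i + Di i)) with hKL
    have hKLs1 : 0 ≤ ∑ i, (BX i * Kf i + Cf i) := Finset.sum_nonneg fun i _ =>
      add_nonneg (mul_nonneg (hBXpos i).le (hKf0 i)) (hCf0 i)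
    have hKLs2 : 0 ≤ ∑ i, (BX i * Kp i + (Cp i + Di i)) := Finset.sum_nonneg fun i _ =>
      add_nonneg (mul_nonneg (hBXpos i).le (hKp0 i)) (add_nonneg (hCp0 i) (hDi i).le)
    have hKL0 : 0 ≤ KL := by simp only [hKL]; linarith
    have hdfst : ∀ z w : ℝ × (Fin n → ℝ), |z.1 - w.1| ≤ dist z w := by
      intro z w; rw [← Real.dist_eq, Prod.dist_eq]; exact le_max_left _ _
    have hdsnd : ∀ (z w : ℝ × (Fin n → ℝ)) (i : Fin n), |z.2 i - w.2 i| ≤ dist z w := by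
      intro z w i
      rw [← Real.dist_eq]
      exact (dist_le_pi_dist z.2 w.2 i).trans (by rw [Prod.dist_eq]; exact le_max_right _ _)
    have hlip : ∀ z w, dist (vf z) (vf w) ≤ KL * dist z w := by
      intro z w
      have hcs : |cS z.1 - cS w.1| ≤ dist z w := (clamp_lip B' z.1 w.1).trans (hdfst z w)
      have hcx : ∀ i, |cX i (z.2 i) - cX i (w.2 i)| ≤ dist z w := fun i =>
        (clamp_lip (BX i) _ _).trans (hdsnd z w i)
      have hcsz := cS_mem z.1
      have hcsw := cS_mem w.1
      have hfd : ∀ i, |f i (cS z.1) - f i (cS w.1)| ≤ Kf i * dist z w := fun i =>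
        (hKfl i _ ⟨hcsz.1, hcsz.2⟩ _ ⟨hcsw.1, hcsw.2⟩).trans
          (mul_le_mul_of_nonneg_left hcs (hKf0 i))
      have hpd : ∀ i, |p i (cS z.1) - p i (cS w.1)| ≤ Kp i * dist z w := fun i =>
        (hKpl i _ ⟨hcsz.1, hcsz.2⟩ _ ⟨hcsw.1, hcsw.2⟩).trans
          (mul_le_mul_of_nonneg_left hcs (hKp0 i))
      have hterm : ∀ i, |f i (cS z.1) * cX i (z.2 i) - f i (cS w.1) * cX i (w.2 i)|
          ≤ (BX i * Kf i + Cf i) * dist z w := by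
        intro i
        have h1 := hprod (f i (cS z.1)) (f i (cS w.1)) (cX i (z.2 i)) (cX i (w.2 i))
          (BX i) (Cf i) (hCfb i _ ⟨hcsz.1, hcsz.2⟩) (hCfb i _ ⟨hcsw.1, hcsw.2⟩)
          (by rw [abs_of_nonneg (cX_mem i (z.2 i)).1]; exact (cX_mem i (z.2 i)).2)
          (by rw [abs_of_nonneg (cX_mem i (w.2 i)).1]; exact (cX_mem i (w.2 i)).2)
        refine h1.trans ?_
        have h2 : BX i * |f i (cS z.1) - f i (cS w.1)| ≤ BX i * (Kf i * dist z w) :=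
          mul_le_mul_of_nonneg_left (hfd i) (hBXpos i).le
        have h3 : Cf i * |cX i (z.2 i) - cX i (w.2 i)| ≤ Cf i * dist z w :=
          mul_le_mul_of_nonneg_left (hcx i) (hCf0 i)
        nlinarith
      have h1 : |(vf z).1 - (vf w).1| ≤ KL * dist z w := by
        simp only [hvf]
        have e : (D * (S0 - cS z.1) - ∑ i, f i (cS z.1) * cX i (z.2 i)) -
                 (D * (S0 - cS w.1) - ∑ i, f i (cS w.1) * cX i (w.2 i))
               = D * (cS w.1 - cS z.1) +
                 ∑ i, (f i (cS w.1) * cX i (w.2 i) - f i (cS z.1) * cX i (z.2 i)) := by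
          rw [Finset.sum_sub_distrib]; ring
        rw [e]
        have h2 : |D * (cS w.1 - cS z.1)| ≤ D * dist z w := by
          rw [abs_mul, abs_of_pos hD]
          apply mul_le_mul_of_nonneg_left _ hD.le
          rw [abs_sub_comm]; exact hcs
        have h3 : |∑ i, (f i (cS w.1) * cX i (w.2 i) - f i (cS z.1) * cX i (z.2 i))|
            ≤ (∑ i, (BX i * Kf i + Cf i)) * dist z w := by
          refine (Finset.abs_sum_le_sum_abs _ _).trans ?_
          rw [Finset.sum_mul]
          apply Finset.sum_le_sum
          intro i _
          rw [abs_sub_comm]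
          exact hterm i
        calc |D * (cS w.1 - cS z.1) +
              ∑ i, (f i (cS w.1) * cX i (w.2 i) - f i (cS z.1) * cX i (z.2 i))|
            ≤ |D * (cS w.1 - cS z.1)| +
              |∑ i, (f i (cS w.1) * cX i (w.2 i) - f i (cS z.1) * cX i (z.2 i))| := abs_add_le _ _
          _ ≤ D * dist z w + (∑ i, (BX i * Kf i + Cf i)) * dist z w := add_le_add h2 h3
          _ = (D + ∑ i, (BX i * Kf i + Cf i)) * dist z w := by ring
          _ ≤ KL * dist z w := by
              apply mul_le_mul_of_nonneg_right _ dist_nonneg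
              simp only [hKL]; linarith
      have h2 : dist (vf z).2 (vf w).2 ≤ KL * dist z w := by
        rw [dist_pi_le_iff (mul_nonneg hKL0 dist_nonneg)]
        intro i
        simp only [hvf]
        rw [Real.dist_eq]
        have h3 := hprod (p i (cS z.1) - Di i) (p i (cS w.1) - Di i)
          (cX i (z.2 i)) (cX i (w.2 i)) (BX i) (Cp i + Di i)
          (by
            have := hCpb i _ ⟨hcsz.1, hcsz.2⟩
            rcases abs_cases (p i (cS z.1)) with hc | hc <;>
              rcases abs_cases (p i (cS z.1) - Di i) with hc' | hc' <;> linarith [hDi i])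
          (by
            have := hCpb i _ ⟨hcsw.1, hcsw.2⟩
            rcases abs_cases (p i (cS w.1)) with hc | hc <;>
              rcases abs_cases (p i (cS w.1) - Di i) with hc' | hc' <;> linarith [hDi i])
          (by rw [abs_of_nonneg (cX_mem i (z.2 i)).1]; exact (cX_mem i (z.2 i)).2)
          (by rw [abs_of_nonneg (cX_mem i (w.2 i)).1]; exact (cX_mem i (w.2 i)).2)
        refine h3.trans ?_
        have h4 : (p i (cS z.1) - Di i) - (p i (cS w.1) - Di i)
            = p i (cS z.1) - p i (cS w.1) := by ring
        rw [h4]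
        have h5 : BX i * |p i (cS z.1) - p i (cS w.1)| ≤ BX i * (Kp i * dist z w) :=
          mul_le_mul_of_nonneg_left (hpd i) (hBXpos i).le
        have h6 : (Cp i + Di i) * |cX i (z.2 i) - cX i (w.2 i)| ≤ (Cp i + Di i) * dist z w :=
          mul_le_mul_of_nonneg_left (hcx i) (add_nonneg (hCp0 i) (hDi i).le)
        have h7 : (BX i * Kp i + (Cp i + Di i)) ≤ KL := by
          simp only [hKL]
          have h8 : BX i * Kp i + (Cp i + Di i) ≤ ∑ j, (BX j * Kp j + (Cp j + Di j)) :=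
            Finset.single_le_sum (f := fun j => BX j * Kp j + (Cp j + Di j))
              (fun j _ => add_nonneg (mul_nonneg (hBXpos j).le (hKp0 j))
                (add_nonneg (hCp0 j) (hDi j).le)) (Finset.mem_univ i)
          linarith
        refine le_trans (add_le_add h5 h6) ?_
        have h8 := mul_le_mul_of_nonneg_right h7 (dist_nonneg (x := z) (y := w))
        calc BX i * (Kp i * dist z w) + (Cp i + Di i) * dist z w
            = (BX i * Kp i + (Cp i + Di i)) * dist z w := by ring
          _ ≤ KL * dist z w := h8
      rw [Prod.dist_eq]
      apply max_le _ h2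
      rw [Real.dist_eq]
      exact h1
    -- global bound on the field
    set CB : ℝ := (D * (|S0| + B') + ∑ i, Cf i * BX i) + ∑ i, (Cp i + Di i) * BX i with hCB
    have hCBs1 : 0 ≤ ∑ i, Cf i * BX i :=
      Finset.sum_nonneg fun i _ => mul_nonneg (hCf0 i) (hBXpos i).le
    have hCBs2 : 0 ≤ ∑ i, (Cp i + Di i) * BX i := Finset.sum_nonneg fun i _ =>
      mul_nonneg (add_nonneg (hCp0 i) (hDi i).le) (hBXpos i).le
    have hCB0 : 0 ≤ CB := by
      simp only [hCB]
      have : 0 ≤ D * (|S0| + B') := mul_nonneg hD.le (by positivity)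
      linarith
    have hbound : ∀ z, ‖vf z‖ ≤ CB := by
      intro z
      have hcsz := cS_mem z.1
      rw [Prod.norm_def]
      apply max_le
      · rw [Real.norm_eq_abs]
        simp only [hvf]
        have h1 : |D * (S0 - cS z.1)| ≤ D * (|S0| + B') := by
          rw [abs_mul, abs_of_pos hD]
          apply mul_le_mul_of_nonneg_left _ hD.le
          calc |S0 - cS z.1| ≤ |S0| + |cS z.1| := by
                rw [sub_eq_add_neg]
                exact (abs_add_le _ _).trans (by rw [abs_neg])
            _ ≤ |S0| + B' := by
                rw [abs_of_nonneg hcsz.1]; linarith [hcsz.2]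
        have h2 : |∑ i, f i (cS z.1) * cX i (z.2 i)| ≤ ∑ i, Cf i * BX i := by
          refine (Finset.abs_sum_le_sum_abs _ _).trans (Finset.sum_le_sum ?_)
          intro i _
          rw [abs_mul]
          have hx := cX_mem i (z.2 i)
          apply mul_le_mul (hCfb i _ ⟨hcsz.1, hcsz.2⟩)
            (by rw [abs_of_nonneg hx.1]; exact hx.2) (abs_nonneg _) (hCf0 i)
        calc |D * (S0 - cS z.1) - ∑ i, f i (cS z.1) * cX i (z.2 i)|
            ≤ |D * (S0 - cS z.1)| + |∑ i, f i (cS z.1) * cX i (z.2 i)| := abs_sub _ _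
          _ ≤ D * (|S0| + B') + ∑ i, Cf i * BX i := add_le_add h1 h2
          _ ≤ CB := by simp only [hCB]; linarith
      · rw [pi_norm_le_iff_of_nonneg hCB0]
        intro i
        rw [Real.norm_eq_abs]
        simp only [hvf]
        rw [abs_mul]
        have hx := cX_mem i (z.2 i)
        have h3 : |p i (cS z.1) - Di i| ≤ Cp i + Di i := by
          have := hCpb i _ ⟨hcsz.1, hcsz.2⟩
          rcases abs_cases (p i (cS z.1)) with hc | hc <;>
            rcases abs_cases (p i (cS z.1) - Di i) with hc' | hc' <;> linarith [hDi i]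
        have h4 : |p i (cS z.1) - Di i| * |cX i (z.2 i)| ≤ (Cp i + Di i) * BX i := by
          apply mul_le_mul h3 (by rw [abs_of_nonneg hx.1]; exact hx.2)
            (abs_nonneg _) (add_nonneg (hCp0 i) (hDi i).le)
        have h5 : (Cp i + Di i) * BX i ≤ ∑ j, (Cp j + Di j) * BX j :=
          Finset.single_le_sum (f := fun j => (Cp j + Di j) * BX j)
            (fun j _ => mul_nonneg (add_nonneg (hCp0 j) (hDi j).le) (hBXpos j).le)
            (Finset.mem_univ i)
        have h6 : 0 ≤ D * (|S0| + B') := mul_nonneg hD.le (by positivity)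
        simp only [hCB]
        linarith

    -- global solutions of the truncated system on [-1, k+1]
    set x₀ : ℝ × (Fin n → ℝ) := (Sinit, xinit) with hx₀
    have hlipW : LipschitzWith (Real.toNNReal KL) vf := by
      apply LipschitzWith.of_dist_le_mul
      intro z w
      refine (hlip z w).trans (mul_le_mul_of_nonneg_right ?_ dist_nonneg)
      rw [Real.coe_toNNReal']; exact le_max_left _ _
    have hPL : ∀ k : ℕ, ∃ sol : ℝ → ℝ × (Fin n → ℝ), sol 0 = x₀ ∧
        ContinuousOn sol (Icc (-1:ℝ) ((k:ℝ)+1)) ∧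
        ∀ t ∈ Ioo (-1:ℝ) ((k:ℝ)+1), HasDerivAt sol (vf (sol t)) t := by
      intro k
      have hk0 : (0:ℝ) ≤ (k:ℝ) := Nat.cast_nonneg k
      have hpl : IsPicardLindelof (fun _ z => vf z) (tmin := -1) (tmax := (k:ℝ)+1)
          ⟨0, by constructor <;> linarith⟩ x₀
          (Real.toNNReal (CB * ((k:ℝ)+2))) 0 (Real.toNNReal CB) (Real.toNNReal KL) := by
        refine IsPicardLindelof.of_time_independent (fun z _ => ?_) hlipW.lipschitzOnWith ?_
        · exact (hbound z).trans (Real.le_coe_toNNReal CB)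
        · have hmax : max ((k:ℝ)+1) (0 - (-1)) ≤ (k:ℝ) + 2 := by
            apply max_le <;> linarith
          rw [Real.coe_toNNReal _ hCB0, Real.coe_toNNReal _ (mul_nonneg hCB0 (by linarith))]
          simp only [NNReal.coe_zero, sub_zero]
          exact mul_le_mul_of_nonneg_left hmax hCB0
      obtain ⟨sol, h0, hsol⟩ := hpl.exists_eq_forall_mem_Icc_hasDerivWithinAt₀
      exact ⟨sol, h0, fun u hu => (hsol u hu).continuousWithinAt, fun t ht =>
        (hsol t (Ioo_subset_Icc_self ht)).hasDerivAt (Icc_mem_nhds ht.1 ht.2)⟩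
    choose sol hsol0 hsolC hsolD using hPL
    -- solutions agree on common intervals
    have hagree : ∀ (j k : ℕ) (t : ℝ), t ∈ Icc (-1:ℝ) (((min j k : ℕ):ℝ)+1) →
        sol j t = sol k t := by
      intro j k t ht
      have hmj : ((min j k : ℕ):ℝ) ≤ (j:ℝ) := by exact_mod_cast min_le_left j k
      have hmk : ((min j k : ℕ):ℝ) ≤ (k:ℝ) := by exact_mod_cast min_le_right j k
      have hm0 : (0:ℝ) ≤ ((min j k : ℕ):ℝ) := Nat.cast_nonneg _
      have h0mem : (0:ℝ) ∈ Ioo (-1:ℝ) (((min j k : ℕ):ℝ)+1) := ⟨by linarith, by linarith⟩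
      refine ODE_solution_unique_of_mem_Icc (v := fun _ z => vf z) (s := fun _ => univ)
        (fun _ _ => hlipW.lipschitzOnWith) h0mem
        ((hsolC j).mono (Icc_subset_Icc le_rfl (by linarith)))
        (fun u hu => hsolD j u ⟨hu.1, by linarith [hu.2]⟩)
        (fun _ _ => mem_univ _)
        ((hsolC k).mono (Icc_subset_Icc le_rfl (by linarith)))
        (fun u hu => hsolD k u ⟨hu.1, by linarith [hu.2]⟩)
        (fun _ _ => mem_univ _)
        (by rw [hsol0 j, hsol0 k]) ht
    -- glue them into a single global solution
    set F : ℝ → ℝ × (Fin n → ℝ) := fun t => sol ⌈t⌉₊ t with hF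
    have hFagree : ∀ (k : ℕ) (s : ℝ), s ∈ Icc (-1:ℝ) ((k:ℝ)+1) → F s = sol k s := by
      intro k s hs
      simp only [hF]
      apply hagree
      refine ⟨hs.1, ?_⟩
      have h1 : s ≤ (⌈s⌉₊:ℝ) + 1 := by
        rcases le_or_gt s 0 with h | h
        · have h2 : (0:ℝ) ≤ (⌈s⌉₊:ℝ) := Nat.cast_nonneg _
          linarith
        · linarith [Nat.le_ceil s]
      have h2 : s ≤ (k:ℝ) + 1 := hs.2
      have h3 : ((min ⌈s⌉₊ k : ℕ):ℝ) = min ((⌈s⌉₊:ℝ)) ((k:ℝ)) := by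
        simp [Nat.cast_min]
      rw [h3]
      rcases le_total ((⌈s⌉₊:ℝ)) ((k:ℝ)) with h | h
      · rw [min_eq_left h]; linarith
      · rw [min_eq_right h]; linarith
    have hF0 : F 0 = x₀ := by
      have h1 : F 0 = sol 0 0 := by
        simp only [hF]
        norm_num
      rw [h1, hsol0 0]
    have hFderiv : ∀ t, 0 ≤ t → HasDerivAt F (vf (F t)) t := by
      intro t ht
      have hk1 : t + 1 ≤ (⌈t + 1⌉₊:ℝ) := Nat.le_ceil _
      have hU : Ioo (-1:ℝ) (t+1) ∈ 𝓝 t := Ioo_mem_nhds (by linarith) (by linarith)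
      have heq : ∀ s ∈ Ioo (-1:ℝ) (t+1), F s = sol ⌈t + 1⌉₊ s := by
        intro s hs
        exact hFagree _ s ⟨hs.1.le, by linarith [hs.2]⟩
      have hFk : F t = sol ⌈t + 1⌉₊ t := heq t ⟨by linarith, by linarith⟩
      have hd : HasDerivAt (sol ⌈t + 1⌉₊) (vf (sol ⌈t + 1⌉₊ t)) t :=
        hsolD _ t ⟨by linarith, by linarith⟩
      rw [← hFk] at hd
      exact hd.congr_of_eventuallyEq (eventually_of_mem hU heq)
    -- components
    set Sf : ℝ → ℝ := fun t => (F t).1 with hSf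
    set xf : Fin n → ℝ → ℝ := fun i t => (F t).2 i with hxf
    have hSf0 : Sf 0 = Sinit := by simp only [hSf]; rw [hF0]
    have hxf0 : ∀ i, xf i 0 = xinit i := by
      intro i; simp only [hxf]; rw [hF0]
    have hSfd : ∀ t, 0 ≤ t → HasDerivAt Sf
        (D * (S0 - cS (Sf t)) - ∑ i, f i (cS (Sf t)) * cX i (xf i t)) t := by
      intro t ht
      have h1 := (ContinuousLinearMap.fst ℝ ℝ (Fin n → ℝ)).hasFDerivAt.comp_hasDerivAt t
        (hFderiv t ht)
      simpa [hvf, hSf, hxf, Function.comp_def] using h1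
    have hxfd : ∀ i t, 0 ≤ t → HasDerivAt (xf i)
        ((p i (cS (Sf t)) - Di i) * cX i (xf i t)) t := by
      intro i t ht
      have h1 := ((ContinuousLinearMap.proj (R := ℝ) (φ := fun _ : Fin n => ℝ) i).comp
        (ContinuousLinearMap.snd ℝ ℝ (Fin n → ℝ))).hasFDerivAt.comp_hasDerivAt t
        (hFderiv t ht)
      simpa [hvf, hSf, hxf, Function.comp_def] using h1
    -- invariance: nonnegativity of xf
    have hxfnn : ∀ i t, 0 ≤ t → 0 ≤ xf i t := by
      intro i
      have hbar := chemostat_barrier_le (c := 0)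
        (g := fun t => - xf i t)
        (G := fun t => -((p i (cS (Sf t)) - Di i) * cX i (xf i t)))
        (fun t ht => (hxfd i t ht).neg)
        (by
          show - xf i 0 ≤ 0
          rw [hxf0 i]; linarith [hx_init i])
        (by
          intro t ht hneg
          show -((p i (cS (Sf t)) - Di i) * cX i (xf i t)) ≤ 0
          have hxneg : xf i t < 0 := by
            have h9 : (0:ℝ) < - xf i t := hneg
            linarith
          have hcx0 : cX i (xf i t) = 0 := by
            simp only [hcX]
            rw [min_eq_left (by linarith [hBXpos i]), max_eq_left (by linarith)]
          rw [hcx0, mul_zero, neg_zero])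
      intro t ht
      have h9 : - xf i t ≤ 0 := hbar t ht
      linarith
    -- invariance: nonnegativity of Sf
    have hSfnn : ∀ t, 0 ≤ t → 0 ≤ Sf t := by
      have hbar := chemostat_barrier_le (c := 0)
        (g := fun t => - Sf t)
        (G := fun t => -(D * (S0 - cS (Sf t)) - ∑ i, f i (cS (Sf t)) * cX i (xf i t)))
        (fun t ht => (hSfd t ht).neg)
        (by
          show - Sf 0 ≤ 0
          rw [hSf0]; linarith [hS_init])
        (by
          intro t ht hneg
          show -(D * (S0 - cS (Sf t)) - ∑ i, f i (cS (Sf t)) * cX i (xf i t)) ≤ 0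
          have hsneg : Sf t < 0 := by
            have h9 : (0:ℝ) < - Sf t := hneg
            linarith
          have hcs0 : cS (Sf t) = 0 := by
            simp only [hcS]
            rw [min_eq_left (by linarith [hB'pos]), max_eq_left (by linarith)]
          rw [hcs0]
          have hsum0 : ∑ i, f i (0:ℝ) * cX i (xf i t) = 0 :=
            Finset.sum_eq_zero fun i _ => by rw [hf0 i, zero_mul]
          rw [hsum0]
          nlinarith [mul_pos hD hS0])
      intro t ht
      have h9 : - Sf t ≤ 0 := hbar t ht
      linarith
    -- invariance: upper bound on Sf
    have hSfub : ∀ t, 0 ≤ t → Sf t ≤ B := by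
      apply chemostat_barrier_le (fun t ht => hSfd t ht)
      · rw [hSf0]; exact hBSinit
      · intro t ht hBt
        have hcsS : S0 ≤ cS (Sf t) := by
          have h1 : S0 ≤ min (Sf t) B' := le_min (by linarith [hBS0]) (le_trans hBS0 hBB')
          exact le_trans h1 (le_max_right _ _)
        have h2 : D * (S0 - cS (Sf t)) ≤ 0 :=
          mul_nonpos_of_nonneg_of_nonpos hD.le (by linarith)
        have h3 : 0 ≤ ∑ i, f i (cS (Sf t)) * cX i (xf i t) :=
          Finset.sum_nonneg fun i _ => mul_nonneg
            (hfnn i _ (cS_mem (Sf t)).1) (cX_mem i (xf i t)).1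
        linarith
    -- the solution never reaches the truncation level in x
    have hxfb : ∀ t, 0 ≤ t → ∀ i, xf i t ≤ MV / c i := by
      by_contra hcon
      push_neg at hcon
      obtain ⟨t1, ht1, j, hj⟩ := hcon
      have hxfc : ∀ i, ContinuousOn (xf i) (Icc 0 t1) := fun i u hu =>
        ((hxfd i u hu.1).continuousAt).continuousWithinAt
      set A := ⋃ i, (Icc (0:ℝ) t1 ∩ (xf i) ⁻¹' (Ici (BX i))) with hA
      have hAclosed : IsClosed A := isClosed_iUnion_of_finite fun i =>
        (hxfc i).preimage_isClosed_of_isClosed isClosed_Icc isClosed_Ici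
      have hreg : ∀ b, 0 ≤ b → b ≤ t1 → (∀ u ∈ Icc (0:ℝ) b, ∀ i, xf i u ≤ BX i) →
          ∀ i, xf i b ≤ MV / c i := by
        intro b hb hbt1 hall i
        have hcutid : ∀ u ∈ Icc (0:ℝ) b, cS (Sf u) = Sf u := fun u hu =>
          cS_id _ (hSfnn u hu.1) (le_trans (hSfub u hu.1) hBB')
        have hSd' : ∀ u ∈ Icc (0:ℝ) b,
            HasDerivAt Sf (D * (S0 - Sf u) - ∑ i, f i (Sf u) * xf i u) u := by
          intro u hu
          have h1 := hSfd u hu.1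
          rw [hcutid u hu] at h1
          have h2 : ∀ i, cX i (xf i u) = xf i u := fun i =>
            cX_id i _ (hxfnn i u hu.1) (hall u hu i)
          simp only [h2] at h1
          exact h1
        have hxd' : ∀ i, ∀ u ∈ Icc (0:ℝ) b,
            HasDerivAt (xf i) ((p i (Sf u) - Di i) * xf i u) u := by
          intro i u hu
          have h1 := hxfd i u hu.1
          rw [hcutid u hu, cX_id i _ (hxfnn i u hu.1) (hall u hu i)] at h1
          exact h1
        have hV := bddV Sf xf b hb (fun u hu => hSfnn u hu.1)
          (fun u hu => le_trans (hSfub u hu.1) hBB') (fun i u hu => hxfnn i u hu.1) hSd' hxd'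
        have hinit : Sf 0 + ∑ i, c i * xf i 0 = Sinit + ∑ i, c i * xinit i := by
          rw [hSf0]
          congr 1
          exact Finset.sum_congr rfl fun i _ => by rw [hxf0 i]
        rw [hinit, ← hMV] at hV
        have h2 : c i * xf i b ≤ ∑ j, c j * xf j b := Finset.single_le_sum
          (f := fun j => c j * xf j b) (fun j _ => mul_nonneg (hc0 j).le (hxfnn j b hb))
          (Finset.mem_univ i)
        have h3 := hSfnn b hb
        rw [le_div_iff₀ (hc0 i), mul_comm]
        linarith
      rcases eq_empty_or_nonempty A with hAe | hAne
      · have hall : ∀ u ∈ Icc (0:ℝ) t1, ∀ i, xf i u ≤ BX i := by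
          intro u hu i
          by_contra h
          push_neg at h
          have hmem : u ∈ A := mem_iUnion.2 ⟨i, hu, le_of_lt h⟩
          rw [hAe] at hmem
          exact absurd hmem (Set.notMem_empty u)
        exact absurd (hreg t1 ht1 le_rfl hall j) (not_le.2 hj)
      · have hAbdd : BddBelow A := ⟨0, fun u hu => by
          rcases mem_iUnion.1 hu with ⟨i, hi⟩; exact hi.1.1⟩
        have ht'A : sInf A ∈ A := hAclosed.csInf_mem hAne hAbdd
        obtain ⟨j0, hj0⟩ := mem_iUnion.1 ht'A
        have ht'0 : 0 ≤ sInf A := hj0.1.1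
        have ht't1 : sInf A ≤ t1 := hj0.1.2
        have hbelow : ∀ u, 0 ≤ u → u < sInf A → ∀ i, xf i u < BX i := by
          intro u hu hut i
          by_contra h
          push_neg at h
          have hmem : u ∈ A := mem_iUnion.2 ⟨i, ⟨⟨hu, le_trans hut.le ht't1⟩, h⟩⟩
          exact absurd (csInf_le hAbdd hmem) (not_le.2 hut)
        have hatt' : ∀ i, xf i (sInf A) ≤ BX i := by
          intro i
          by_contra h
          push_neg at h
          rcases eq_or_lt_of_le ht'0 with h0 | h0
          · rw [← h0, hxf0 i] at h
            have := (hxinitle i).trans_lt (hMVltBX i)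
            linarith
          · have hnb : (𝓝[Ico 0 (sInf A)] (sInf A)).NeBot := by
              rw [← mem_closure_iff_nhdsWithin_neBot, closure_Ico (ne_of_lt h0)]
              exact ⟨ht'0, le_refl _⟩
            have htd : Tendsto (xf i) (𝓝[Ico 0 (sInf A)] (sInf A)) (𝓝 (xf i (sInf A))) :=
              ((hxfd i (sInf A) ht'0).continuousAt).tendsto.mono_left nhdsWithin_le_nhds
            have hev : ∀ᶠ u in 𝓝[Ico 0 (sInf A)] (sInf A), BX i < xf i u :=
              htd.eventually (eventually_gt_nhds h)
            obtain ⟨u, hBu, hum⟩ :=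
              (hev.and (eventually_of_mem self_mem_nhdsWithin fun u hu => hu)).exists
            exact absurd (csInf_le hAbdd (mem_iUnion.2
              ⟨i, ⟨⟨hum.1, le_trans hum.2.le ht't1⟩, hBu.le⟩⟩)) (not_le.2 hum.2)
        have hall : ∀ u ∈ Icc (0:ℝ) (sInf A), ∀ i, xf i u ≤ BX i := by
          intro u hu i
          rcases lt_or_eq_of_le hu.2 with h | h
          · exact (hbelow u hu.1 h i).le
          · rw [h]; exact hatt' i
        have h1 := hreg (sInf A) ht'0 ht't1 hall j0
        have hj0b : BX j0 ≤ xf j0 (sInf A) := hj0.2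
        have h2 := (h1 ).trans_lt (hMVltBX j0)
        linarith
    -- final witnesses
    refine ⟨Sf, xf, hSf0, hxf0, ?_, ?_⟩
    · intro t ht
      rw [mem_Ici] at ht
      have h1 := hSfd t ht
      have hcs : cS (Sf t) = Sf t := cS_id _ (hSfnn t ht) (le_trans (hSfub t ht) hBB')
      have hcx : ∀ i, cX i (xf i t) = xf i t := fun i =>
        cX_id i _ (hxfnn i t ht) ((hxfb t ht i).trans (hMVltBX i).le)
      rw [hcs] at h1
      simp only [hcx] at h1
      exact h1
    · intro i t ht
      rw [mem_Ici] at ht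
      have h1 := hxfd i t ht
      have hcs : cS (Sf t) = Sf t := cS_id _ (hSfnn t ht) (le_trans (hSfub t ht) hBB')
      have hcx : cX i (xf i t) = xf i t :=
        cX_id i _ (hxfnn i t ht) ((hxfb t ht i).trans (hMVltBX i).le)
      rw [hcs, hcx] at h1
      exact h1


  · -- PART 2: boundedness of arbitrary global solutions
    intro S x hSinit hxinit hS' hx'
    have hScont : ContinuousOn S (Ici 0) := fun u hu =>
      ((hS' u hu).continuousAt).continuousWithinAt
    -- nonnegativity of x i
    have hxnn : ∀ i, ∀ t, 0 ≤ t → 0 ≤ x i t := by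
      intro i
      apply chemostat_x_nonneg (a := fun t => p i (S t) - Di i)
        (fun t ht => hx' i t ht)
        (((hpc i).comp_continuousOn hScont).sub continuousOn_const)
      rw [hxinit i]; exact hx_init i
    -- nonnegativity of S
    have hSnn : ∀ t, 0 ≤ t → 0 ≤ S t := by
      apply chemostat_barrier_pos (G := fun t => D * (S0 - S t) - ∑ i, f i (S t) * x i t) hS'
      · apply ContinuousOn.sub
        · exact (continuousOn_const.mul (continuousOn_const.sub hScont))
        · apply continuousOn_finset_sum
          intro i _
          exact ((hfc i).comp_continuousOn hScont).mul (fun u hu =>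
            ((hx' i u hu).continuousAt).continuousWithinAt)
      · rw [hSinit]; exact hS_init
      · intro t ht hSt
        have : ∑ i, f i (S t) * x i t = 0 := by
          apply Finset.sum_eq_zero
          intro i _
          rw [hSt, hf0 i, zero_mul]
        rw [this, hSt]
        simpa using mul_pos hD hS0
    -- upper bound on S
    have hSub : ∀ t, 0 ≤ t → S t ≤ B := by
      apply chemostat_barrier_le hS'
      · rw [hSinit]; exact hBSinit
      · intro t ht hBt
        have h1 : D * (S0 - S t) ≤ 0 := by
          apply mul_nonpos_of_nonneg_of_nonpos hD.le
          have : S0 ≤ B := hBS0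
          linarith
        have h2 : 0 ≤ ∑ i, f i (S t) * x i t := by
          apply Finset.sum_nonneg
          intro i _
          exact mul_nonneg (hfnn i _ (le_trans (le_trans (by positivity) hBS0) (by linarith)))
            (hxnn i t ht)
        linarith
    -- Lyapunov bound
    have hVb : ∀ b, 0 ≤ b → S b + ∑ i, c i * x i b ≤ MV := by
      intro b hb
      have := bddV S x b hb (fun t ht => hSnn t ht.1)
        (fun t ht => le_trans (hSub t ht.1) hBB')
        (fun i t ht => hxnn i t ht.1)
        (fun t ht => hS' t ht.1) (fun i t ht => hx' i t ht.1)
      simp only [hSinit, hxinit] at this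
      exact le_trans this (le_of_eq hMV.symm)
    -- assemble the final bound
    refine ⟨B' + ((∑ i, MV / c i) + MV), ?_⟩
    intro t ht
    rw [mem_Ici] at ht
    have hsumnn : 0 ≤ ∑ i, MV / c i :=
      Finset.sum_nonneg fun i _ => div_nonneg hMVpos.le (hc0 i).le
    constructor
    · rw [abs_of_nonneg (hSnn t ht)]
      have := hSub t ht
      have := hBB'
      linarith [hMVpos]
    · intro i
      rw [abs_of_nonneg (hxnn i t ht)]
      have h1 : c i * x i t ≤ ∑ j, c j * x j t := by
        exact Finset.single_le_sum (f := fun j => c j * x j t)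
          (fun j _ => mul_nonneg (hc0 j).le (hxnn j t ht)) (Finset.mem_univ i)
      have h2 : c i * x i t ≤ MV := by
        have := hVb t ht
        have := hSnn t ht
        linarith
      have h3 : x i t ≤ MV / c i := (le_div_iff₀ (hc0 i)).2 (by linarith [mul_comm (c i) (x i t)])
      have h4 : MV / c i ≤ ∑ j, MV / c j :=
        Finset.single_le_sum (f := fun j => MV / c j)
          (fun j _ => div_nonneg hMVpos.le (hc0 j).le) (Finset.mem_univ i)
      linarith [hB'pos, hMVpos]
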